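/- Let W be a trace-free Osserman algebraic curvature tensor on Euclidean space V = V_B ⊕ V_F (orthogonal direct sum, both summands nonzero) such that W(x,u)y ∈ V_B and W(x,u)v ∈ V_F for x,y ∈ V_B, u,v ∈ V_F, and mixed components W(x,u,y,·)|_{V_F} and W(u,x,v,·)|_{V_B} vanish for orthogonal arguments. If additionally each vector of V_F is an eigenvector of J_W(x) for every unit x ∈ V_B and vice versa, then W = 0. -/

import Mathlib

open scoped RealInnerProductSpace

open Polynomial

lemma sym_toMatrix_diag {V : Type*} [NormedAddCommGroup V] [InnerProductSpace ℝ V]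
    [FiniteDimensional ℝ V] {m : ℕ} (hm : Module.finrank ℝ V = m)
    (T : V →ₗ[ℝ] V) (hT : T.IsSymmetric) :
    LinearMap.toMatrix (hT.eigenvectorBasis hm).toBasis (hT.eigenvectorBasis hm).toBasis T
      = Matrix.diagonal (hT.eigenvalues hm) := by
  ext i j
  rw [LinearMap.toMatrix_apply]
  simp only [OrthonormalBasis.coe_toBasis, hT.apply_eigenvectorBasis hm, map_smul,
    Module.Basis.repr_self, Finsupp.smul_single, smul_eq_mul, mul_one, Finsupp.single_apply,
    Matrix.diagonal_apply]
  split_ifs with h <;> simp [h]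

lemma charpoly_diag {m : ℕ} (d : Fin m → ℝ) :
    (Matrix.diagonal d).charpoly = ∏ i, (X - C (d i)) := by
  have : (Matrix.diagonal d).charmatrix = Matrix.diagonal fun i => X - C (d i) := by
    ext i j
    by_cases h : i = j <;>
      simp [Matrix.charmatrix, Matrix.diagonal_apply, h, Matrix.one_apply]
  rw [Matrix.charpoly, this, Matrix.det_diagonal]

lemma sym_charpoly {V : Type*} [NormedAddCommGroup V] [InnerProductSpace ℝ V]
    [FiniteDimensional ℝ V] {m : ℕ} (hm : Module.finrank ℝ V = m)
    (T : V →ₗ[ℝ] V) (hT : T.IsSymmetric) :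
    T.charpoly = ∏ i, (X - C (hT.eigenvalues hm i)) := by
  rw [← LinearMap.charpoly_toMatrix T (hT.eigenvectorBasis hm).toBasis,
    sym_toMatrix_diag hm T hT, charpoly_diag]

lemma sym_trace_sq {V : Type*} [NormedAddCommGroup V] [InnerProductSpace ℝ V]
    [FiniteDimensional ℝ V] {m : ℕ} (hm : Module.finrank ℝ V = m)
    (T : V →ₗ[ℝ] V) (hT : T.IsSymmetric) :
    LinearMap.trace ℝ V (T ∘ₗ T) = ∑ i, (hT.eigenvalues hm i) ^ 2 := by
  rw [LinearMap.trace_eq_matrix_trace ℝ (hT.eigenvectorBasis hm).toBasis,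
    LinearMap.toMatrix_comp _ (hT.eigenvectorBasis hm).toBasis _,
    sym_toMatrix_diag hm T hT, Matrix.diagonal_mul_diagonal, Matrix.trace_diagonal]
  exact Finset.sum_congr rfl fun i _ => (sq _).symm

lemma sym_trace_sq_roots {V : Type*} [NormedAddCommGroup V] [InnerProductSpace ℝ V]
    [FiniteDimensional ℝ V] (T : V →ₗ[ℝ] V) (hT : T.IsSymmetric) :
    LinearMap.trace ℝ V (T ∘ₗ T) = ((T.charpoly.roots).map (fun a => a ^ 2)).sum := by
  rw [sym_trace_sq rfl T hT, sym_charpoly rfl T hT]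
  have : (∏ i, (X - C (hT.eigenvalues rfl i))).roots
      = (Finset.univ.val.map (hT.eigenvalues rfl)) := by
    rw [← Polynomial.roots_multiset_prod_X_sub_C (Finset.univ.val.map (hT.eigenvalues rfl))]
    rw [Multiset.map_map]
    rfl
  rw [this, Multiset.map_map]
  rfl

lemma sym_eq_zero_of_trace_sq {V : Type*} [NormedAddCommGroup V] [InnerProductSpace ℝ V]
    [FiniteDimensional ℝ V] (T : V →ₗ[ℝ] V) (hT : T.IsSymmetric)
    (h : LinearMap.trace ℝ V (T ∘ₗ T) = 0) : T = 0 := by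
  rw [sym_trace_sq rfl T hT] at h
  have hz : ∀ i ∈ Finset.univ, (hT.eigenvalues rfl i) ^ 2 = 0 := by
    intro i _
    exact (Finset.sum_eq_zero_iff_of_nonneg (fun i _ => sq_nonneg _)).mp h i (Finset.mem_univ i)
  apply Module.Basis.ext (hT.eigenvectorBasis (rfl : Module.finrank ℝ V = _)).toBasis
  intro i
  have : hT.eigenvalues rfl i = 0 := by
    have := hz i (Finset.mem_univ i); nlinarith [this]
  simp [hT.apply_eigenvectorBasis rfl i, this]


set_option maxHeartbeats 3200000 in
/-- A trace-free Osserman algebraic curvature tensor on a Euclidean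
space `V = V_B ⊕ V_F` (orthogonal direct sum, both summands nonzero) satisfying the
structural conditions of the Weyl tensor of a Riemannian product (preservation of
the factors by the mixed Jacobi operators, vanishing of the mixed components with
orthogonal arguments, and each factor consisting of eigenvectors for the Jacobi
operators of unit vectors of the other factor) vanishes identically. -/
theorem product_weyl_osserman_vanishes
    {V : Type*} [NormedAddCommGroup V] [InnerProductSpace ℝ V]
    [FiniteDimensional ℝ V] (n : ℕ) (hn : Module.finrank ℝ V = n)
    (VB : Submodule ℝ V) (VF : Submodule ℝ V) (hVF : VF = VBᗮ)
    (hB : 1 ≤ Module.finrank ℝ VB) (hF : 1 ≤ Module.finrank ℝ VF)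
    (Wv : V →ₗ[ℝ] V →ₗ[ℝ] V →ₗ[ℝ] V)
    (W : V → V → V → V → ℝ) (hWdef : ∀ x y z w : V, W x y z w = ⟪Wv x y z, w⟫)
    (hanti1 : ∀ x y z : V, Wv x y z = - Wv y x z)
    (hanti2 : ∀ x y z w : V, W x y z w = - W x y w z)
    (hpair : ∀ x y z w : V, W x y z w = W z w x y)
    (hbianchi : ∀ x y z : V, Wv x y z + Wv y z x + Wv z x y = 0)
    -- trace-free (zero Ricci contraction)
    (hricci : ∀ (c : OrthonormalBasis (Fin n) ℝ V) (x y : V),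
      ∑ i, W x (c i) y (c i) = 0)
    (J : V → V →ₗ[ℝ] V) (hJ : ∀ x y : V, J x y = Wv x y x)
    -- Osserman: constant eigenvalues on the unit sphere
    (hOss : ∀ x y : V, ‖x‖ = 1 → ‖y‖ = 1 → (J x).charpoly = (J y).charpoly)
    -- structural hypotheses abstracting the Weyl tensor of a Riemannian product:
    (hpresB : ∀ x y : V, x ∈ VB → y ∈ VB → ∀ u : V, u ∈ VF → Wv x u y ∈ VB)
    (hpresF : ∀ x : V, x ∈ VB → ∀ u v : V, u ∈ VF → v ∈ VF → Wv x u v ∈ VF)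
    (hmixB : ∀ x y : V, x ∈ VB → y ∈ VB → ⟪x, y⟫ = 0 →
      ∀ u w : V, u ∈ VF → w ∈ VF → W x u y w = 0)
    (hmixF : ∀ u v : V, u ∈ VF → v ∈ VF → ⟪u, v⟫ = 0 →
      ∀ x z : V, x ∈ VB → z ∈ VB → W u x v z = 0)
    -- each vector of `V_F` is an eigenvector of `J_W(x)` for unit `x ∈ V_B`, and vice versa
    (heigF : ∀ x : V, x ∈ VB → ‖x‖ = 1 → ∀ u : V, u ∈ VF → ∃ lam : ℝ, J x u = lam • u)
    (heigB : ∀ u : V, u ∈ VF → ‖u‖ = 1 → ∀ x : V, x ∈ VB → ∃ lam : ℝ, J u x = lam • x) :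
    ∀ x y z w : V, W x y z w = 0 := by
  -- basic orthogonality facts
  have horthBF : ∀ x ∈ VB, ∀ u ∈ VF, ⟪x, u⟫ = (0:ℝ) := by
    intro x hx u hu
    rw [hVF] at hu
    exact (Submodule.mem_orthogonal VB u).mp hu x hx
  have hVB : VB = VFᗮ := by rw [hVF, Submodule.orthogonal_orthogonal]
  have memVB : ∀ v : V, (∀ w ∈ VF, ⟪v, w⟫ = (0:ℝ)) → v ∈ VB := by
    intro v h; rw [hVB]; exact (Submodule.mem_orthogonal' VF v).mpr h
  have memVF : ∀ v : V, (∀ z ∈ VB, ⟪v, z⟫ = (0:ℝ)) → v ∈ VF := by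
    intro v h; rw [hVF]; exact (Submodule.mem_orthogonal' VB v).mpr h
  have hdecomp : ∀ v : V, ∃ b ∈ VB, ∃ f ∈ VF, v = b + f := by
    intro v
    obtain ⟨b, hb, f, hf, hv⟩ := VB.exists_add_mem_mem_orthogonal v
    exact ⟨b, hb, f, by rw [hVF]; exact hf, hv⟩
  have hv0 : ∀ v : V, (∀ z ∈ VB, ⟪v, z⟫ = (0:ℝ)) → (∀ w ∈ VF, ⟪v, w⟫ = (0:ℝ)) → v = 0 := by
    intro v h1 h2
    have hvB : v ∈ VB := memVB v h2
    exact inner_self_eq_zero.mp (h1 v hvB)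
  -- scalar symmetries
  have Wa1 : ∀ a b c d : V, W a b c d = -W b a c d := by
    intro a b c d
    rw [hWdef, hWdef, hanti1, inner_neg_left]
  have hbianchiW : ∀ a b c d : V, W a b c d + W b c a d + W c a b d = 0 := by
    intro a b c d
    have h := congrArg (fun v : V => (inner ℝ v d : ℝ)) (hbianchi a b c)
    simpa [inner_add_left, hWdef] using h
  -- Step 1: mixed Jacobi vanishing at the vector level
  have hBuB : ∀ x ∈ VB, ∀ u ∈ VF, Wv x u x = 0 := by
    intro x hx u hu
    by_cases hx0 : x = 0
    · simp [hx0]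
    by_cases hu0 : u = 0
    · simp [hu0]
    set c : ℝ := ‖x‖⁻¹ with hc_def
    have hc : c ≠ 0 := inv_ne_zero (norm_ne_zero_iff.mpr hx0)
    have hx' : c • x ∈ VB := VB.smul_mem c hx
    have hn' : ‖c • x‖ = 1 := by
      rw [norm_smul, Real.norm_eq_abs, hc_def, abs_inv, abs_norm]
      exact inv_mul_cancel₀ (norm_ne_zero_iff.mpr (by assumption))
    obtain ⟨lam, hlam⟩ := heigF (c • x) hx' hn' u hu
    rw [hJ] at hlam
    have hmemB : Wv (c • x) u (c • x) ∈ VB := hpresB _ _ hx' hx' u hu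
    have hmemF : Wv (c • x) u (c • x) ∈ VF := hlam ▸ VF.smul_mem lam hu
    have h0 : Wv (c • x) u (c • x) = 0 :=
      inner_self_eq_zero.mp (horthBF _ hmemB _ hmemF)
    have hexp : Wv (c • x) u (c • x) = (c * c) • Wv x u x := by
      simp [map_smul, LinearMap.smul_apply, smul_smul]
    rw [hexp] at h0
    rcases smul_eq_zero.mp h0 with h | h
    · exact absurd h (mul_ne_zero hc hc)
    · exact h
  have hFuF : ∀ u ∈ VF, ∀ x ∈ VB, Wv u x u = 0 := by
    intro u hu x hx
    by_cases hu0 : u = 0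
    · simp [hu0]
    by_cases hx0 : x = 0
    · simp [hx0]
    set c : ℝ := ‖u‖⁻¹ with hc_def
    have hc : c ≠ 0 := inv_ne_zero (norm_ne_zero_iff.mpr hu0)
    have hu' : c • u ∈ VF := VF.smul_mem c hu
    have hn' : ‖c • u‖ = 1 := by
      rw [norm_smul, Real.norm_eq_abs, hc_def, abs_inv, abs_norm]
      exact inv_mul_cancel₀ (norm_ne_zero_iff.mpr (by assumption))
    obtain ⟨lam, hlam⟩ := heigB (c • u) hu' hn' x hx
    rw [hJ] at hlam
    have hmemF : Wv (c • u) x (c • u) ∈ VF := by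
      rw [hanti1]
      exact VF.neg_mem (hpresF x hx _ _ hu' hu')
    have hmemB : Wv (c • u) x (c • u) ∈ VB := hlam ▸ VB.smul_mem lam hx
    have h0 : Wv (c • u) x (c • u) = 0 :=
      inner_self_eq_zero.mp (horthBF _ hmemB _ hmemF)
    have hexp : Wv (c • u) x (c • u) = (c * c) • Wv u x u := by
      simp [map_smul, LinearMap.smul_apply, smul_smul]
    rw [hexp] at h0
    rcases smul_eq_zero.mp h0 with h | h
    · exact absurd h (mul_ne_zero hc hc)
    · exact h
  -- scalar versions
  have hS1 : ∀ x ∈ VB, ∀ u ∈ VF, ∀ y : V, W x u x y = 0 := by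
    intro x hx u hu y
    rw [hWdef, hBuB x hx u hu, inner_zero_left]
  have hS1F : ∀ u ∈ VF, ∀ x ∈ VB, ∀ y : V, W u x u y = 0 := by
    intro u hu x hx y
    rw [hWdef, hFuF u hu x hx, inner_zero_left]
  -- polarized vector identities
  have h13v : ∀ x ∈ VB, ∀ z ∈ VB, ∀ u ∈ VF, Wv x u z = -Wv z u x := by
    intro x hx z hz u hu
    have h := hBuB (x + z) (VB.add_mem hx hz) u hu
    have hexp : Wv (x + z) u (x + z)
        = Wv x u x + Wv x u z + Wv z u x + Wv z u z := by
      simp [map_add, LinearMap.add_apply]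
      abel
    rw [hexp, hBuB x hx u hu, hBuB z hz u hu] at h
    have : Wv x u z + Wv z u x = 0 := by
      simpa using h
    linear_combination (norm := abel) this
  have h13vF : ∀ u ∈ VF, ∀ v ∈ VF, ∀ x ∈ VB, Wv u x v = -Wv v x u := by
    intro u hu v hv x hx
    have h := hFuF (u + v) (VF.add_mem hu hv) x hx
    have hexp : Wv (u + v) x (u + v)
        = Wv u x u + Wv u x v + Wv v x u + Wv v x v := by
      simp [map_add, LinearMap.add_apply]
      abel
    rw [hexp, hFuF u hu x hx, hFuF v hv x hx] at h
    have : Wv u x v + Wv v x u = 0 := by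
      simpa using h
    linear_combination (norm := abel) this
  -- scalar 1-3 antisymmetry with mixed middle slot
  have h13 : ∀ x ∈ VB, ∀ z ∈ VB, ∀ u ∈ VF, ∀ y : V, W x u z y = -W z u x y := by
    intro x hx z hz u hu y
    rw [hWdef, hWdef, h13v x hx z hz u hu, inner_neg_left]
  have h13F : ∀ u ∈ VF, ∀ v ∈ VF, ∀ x ∈ VB, ∀ y : V, W u x v y = -W v x u y := by
    intro u hu v hv x hx y
    rw [hWdef, hWdef, h13vF u hu v hv x hx, inner_neg_left]
  -- two-mixed components vanish
  have hBFBF : ∀ x ∈ VB, ∀ u ∈ VF, ∀ y ∈ VB, ∀ w ∈ VF, W x u y w = 0 := by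
    intro x hx u hu y hy w hw
    by_cases hx0 : x = 0
    · simp [hx0, hWdef]
    set c : ℝ := (inner ℝ x y : ℝ) / (inner ℝ x x : ℝ) with hc_def
    have hxx : (inner ℝ x x : ℝ) ≠ 0 := inner_self_ne_zero.mpr hx0
    have hy' : y - c • x ∈ VB := VB.sub_mem hy (VB.smul_mem c hx)
    have horto : (inner ℝ x (y - c • x) : ℝ) = 0 := by
      rw [inner_sub_right, real_inner_smul_right, hc_def]
      field_simp
      ring
    have hsplit : W x u y w = c * W x u x w + W x u (y - c • x) w := by
      rw [hWdef, hWdef, hWdef]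
      have : Wv x u y = c • Wv x u x + Wv x u (y - c • x) := by
        rw [map_sub, map_smul]
        abel
      rw [this, inner_add_left, real_inner_smul_left]
    rw [hsplit, hS1 x hx u hu w, hmixB x (y - c • x) hx hy' horto u w hu hw]
    ring
  have hFBFB : ∀ u ∈ VF, ∀ x ∈ VB, ∀ v ∈ VF, ∀ z ∈ VB, W u x v z = 0 := by
    intro u hu x hx v hv z hz
    by_cases hu0 : u = 0
    · simp [hu0, hWdef]
    set c : ℝ := (inner ℝ u v : ℝ) / (inner ℝ u u : ℝ) with hc_def
    have huu : (inner ℝ u u : ℝ) ≠ 0 := inner_self_ne_zero.mpr hu0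
    have hv' : v - c • u ∈ VF := VF.sub_mem hv (VF.smul_mem c hu)
    have horto : (inner ℝ u (v - c • u) : ℝ) = 0 := by
      rw [inner_sub_right, real_inner_smul_right, hc_def]
      field_simp
      ring
    have hsplit : W u x v z = c * W u x u z + W u x (v - c • u) z := by
      rw [hWdef, hWdef, hWdef]
      have : Wv u x v = c • Wv u x u + Wv u x (v - c • u) := by
        rw [map_sub, map_smul]
        abel
      rw [this, inner_add_left, real_inner_smul_left]
    rw [hsplit, hS1F u hu x hx z, hmixF u (v - c • u) hu hv' horto x z hx hz]
    ring
  have hBFFB : ∀ x ∈ VB, ∀ u ∈ VF, ∀ w ∈ VF, ∀ y ∈ VB, W x u w y = 0 := by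
    intro x hx u hu w hw y hy
    rw [hanti2, hBFBF x hx u hu y hy w hw, neg_zero]
  have hFBBF : ∀ u ∈ VF, ∀ x ∈ VB, ∀ y ∈ VB, ∀ w ∈ VF, W u x y w = 0 := by
    intro u hu x hx y hy w hw
    rw [hanti2, hFBFB u hu x hx w hw y hy, neg_zero]
  have hFFBB : ∀ u ∈ VF, ∀ w ∈ VF, ∀ x ∈ VB, ∀ y ∈ VB, W u w x y = 0 := by
    intro u hu w hw x hx y hy
    have h := hbianchiW u w x y
    rw [hFBFB w hw x hx u hu y hy, hBFFB x hx u hu w hw y hy] at h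
    linarith
  have hBBFF : ∀ x ∈ VB, ∀ y ∈ VB, ∀ u ∈ VF, ∀ w ∈ VF, W x y u w = 0 := by
    intro x hx y hy u hu w hw
    rw [hpair, hFFBB u hu w hw x hx y hy]
  -- one-F components vanish (the 2g = -g trick)
  have hBFBB : ∀ z ∈ VB, ∀ u ∈ VF, ∀ x ∈ VB, ∀ y ∈ VB, W z u x y = 0 := by
    have key : ∀ u ∈ VF, ∀ z ∈ VB, ∀ x ∈ VB, ∀ y ∈ VB,
        2 * W z u x y = -W y u z x := by
      intro u hu z hz x hx y hy
      have e1 : W z u x y = W x y z u := hpair z u x y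
      have e2 : W x u z y = W z y x u := hpair x u z y
      have e3 : W z y x u = -W y z x u := Wa1 z y x u
      have e4 : W x y z u + W y z x u + W z x y u = 0 := hbianchiW x y z u
      have e5 : W z x y u = W y u z x := hpair z x y u
      have e6 : W x u z y = -W z u x y := h13 x hx z hz u hu y
      linarith
    intro z hz u hu x hx y hy
    have k1 := key u hu z hz x hx y hy
    have k2 := key u hu y hy z hz x hx
    have k3 := key u hu x hx y hy z hz
    linarith
  have hFBBB : ∀ u ∈ VF, ∀ z ∈ VB, ∀ x ∈ VB, ∀ y ∈ VB, W u z x y = 0 := by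
    intro u hu z hz x hx y hy
    rw [Wa1, hBFBB z hz u hu x hx y hy, neg_zero]
  have hBBFB : ∀ x ∈ VB, ∀ y ∈ VB, ∀ u ∈ VF, ∀ z ∈ VB, W x y u z = 0 := by
    intro x hx y hy u hu z hz
    rw [hpair, hFBBB u hu z hz x hx y hy]
  have hBBBF : ∀ x ∈ VB, ∀ y ∈ VB, ∀ z ∈ VB, ∀ u ∈ VF, W x y z u = 0 := by
    intro x hx y hy z hz u hu
    rw [hpair, hBFBB z hz u hu x hx y hy]
  -- three-F components vanish (mirror)
  have hFBFF : ∀ w ∈ VF, ∀ x ∈ VB, ∀ u ∈ VF, ∀ v ∈ VF, W w x u v = 0 := by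
    have key : ∀ x ∈ VB, ∀ w ∈ VF, ∀ u ∈ VF, ∀ v ∈ VF,
        2 * W w x u v = -W v x w u := by
      intro x hx w hw u hu v hv
      have e1 : W w x u v = W u v w x := hpair w x u v
      have e2 : W u x w v = W w v u x := hpair u x w v
      have e3 : W w v u x = -W v w u x := Wa1 w v u x
      have e4 : W u v w x + W v w u x + W w u v x = 0 := hbianchiW u v w x
      have e5 : W w u v x = W v x w u := hpair w u v x
      have e6 : W u x w v = -W w x u v := h13F u hu w hw x hx v
      linarith
    intro w hw x hx u hu v hv
    have k1 := key x hx w hw u hu v hv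
    have k2 := key x hx v hv w hw u hu
    have k3 := key x hx u hu v hv w hw
    linarith
  have hBFFF : ∀ x ∈ VB, ∀ w ∈ VF, ∀ u ∈ VF, ∀ v ∈ VF, W x w u v = 0 := by
    intro x hx w hw u hu v hv
    rw [Wa1, hFBFF w hw x hx u hu v hv, neg_zero]
  have hFFBF : ∀ u ∈ VF, ∀ v ∈ VF, ∀ x ∈ VB, ∀ w ∈ VF, W u v x w = 0 := by
    intro u hu v hv x hx w hw
    rw [hpair, hBFFF x hx w hw u hu v hv]
  have hFFFB : ∀ u ∈ VF, ∀ v ∈ VF, ∀ w ∈ VF, ∀ x ∈ VB, W u v w x = 0 := by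
    intro u hu v hv w hw x hx
    rw [hpair, hFBFF w hw x hx u hu v hv]
  -- cross terms of Wv vanish entirely
  have hcross1 : ∀ x ∈ VB, ∀ u ∈ VF, ∀ v : V, Wv x v u = 0 := by
    intro x hx u hu v
    obtain ⟨b, hb, f, hf, rfl⟩ := hdecomp v
    have hb1 : Wv x b u = 0 := by
      apply hv0
      · intro z hz; rw [← hWdef]; exact hBBFB x hx b hb u hu z hz
      · intro w hw; rw [← hWdef]; exact hBBFF x hx b hb u hu w hw
    have hf1 : Wv x f u = 0 := by
      apply hv0
      · intro z hz; rw [← hWdef]; exact hBFFB x hx f hf u hu z hz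
      · intro w hw; rw [← hWdef]; exact hBFFF x hx f hf u hu w hw
    simp [map_add, LinearMap.add_apply, hb1, hf1]
  have hcross2 : ∀ x ∈ VB, ∀ u ∈ VF, ∀ v : V, Wv u v x = 0 := by
    intro x hx u hu v
    obtain ⟨b, hb, f, hf, rfl⟩ := hdecomp v
    have hb1 : Wv u b x = 0 := by
      apply hv0
      · intro z hz; rw [← hWdef]; exact hFBBB u hu b hb x hx z hz
      · intro w hw; rw [← hWdef]; exact hFBBF u hu b hb x hx w hw
    have hf1 : Wv u f x = 0 := by
      apply hv0
      · intro z hz; rw [← hWdef]; exact hFFBB u hu f hf x hx z hz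
      · intro w hw; rw [← hWdef]; exact hFFBF u hu f hf x hx w hw
    simp [map_add, LinearMap.add_apply, hb1, hf1]
  -- J is symmetric
  have hsymJ : ∀ v : V, (J v).IsSymmetric := by
    intro v a b
    rw [hJ, hJ]
    calc (inner ℝ (Wv v a v) b : ℝ) = W v a v b := (hWdef v a v b).symm
      _ = W v b v a := by rw [hpair v a v b]
      _ = (inner ℝ (Wv v b v) a : ℝ) := hWdef v b v a
      _ = (inner ℝ a (Wv v b v) : ℝ) := real_inner_comm _ _
  -- existence of unit vectors in each factor
  have hexB : ∃ x, x ∈ VB ∧ ‖x‖ = 1 := by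
    have hbot : VB ≠ ⊥ := by
      intro h; rw [h] at hB; simp at hB
    obtain ⟨x, hx, hx0⟩ := (Submodule.ne_bot_iff VB).mp hbot
    refine ⟨‖x‖⁻¹ • x, VB.smul_mem _ hx, ?_⟩
    rw [norm_smul, Real.norm_eq_abs, abs_inv, abs_norm]
    exact inv_mul_cancel₀ (norm_ne_zero_iff.mpr hx0)
  have hexF : ∃ u, u ∈ VF ∧ ‖u‖ = 1 := by
    have hbot : VF ≠ ⊥ := by
      intro h; rw [h] at hF; simp at hF
    obtain ⟨u, hu, hu0⟩ := (Submodule.ne_bot_iff VF).mp hbot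
    refine ⟨‖u‖⁻¹ • u, VF.smul_mem _ hu, ?_⟩
    rw [norm_smul, Real.norm_eq_abs, abs_inv, abs_norm]
    exact inv_mul_cancel₀ (norm_ne_zero_iff.mpr hu0)
  -- core trace argument: Jacobi operators of unit vectors in the factors vanish
  have core : ∀ x, x ∈ VB → ‖x‖ = 1 → ∀ u, u ∈ VF → ‖u‖ = 1 → J x = 0 ∧ J u = 0 := by
    intro x hx hx1 u hu hu1
    have hTS : (J x) ∘ₗ (J u) = 0 := by
      apply LinearMap.ext; intro v
      obtain ⟨b, hb, f, hf, rfl⟩ := hdecomp v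
      have hSb : J u b = 0 := by rw [hJ]; exact hFuF u hu b hb
      have hSf : J u f ∈ VF := by
        apply memVF; intro z hz
        rw [hJ, ← hWdef]; exact hFFFB u hu f hf u hu z hz
      have hTf : J x (J u f) = 0 := by rw [hJ]; exact hBuB x hx _ hSf
      simp [LinearMap.comp_apply, map_add, hSb, hTf]
    have hST : (J u) ∘ₗ (J x) = 0 := by
      apply LinearMap.ext; intro v
      obtain ⟨b, hb, f, hf, rfl⟩ := hdecomp v
      have hTf : J x f = 0 := by rw [hJ]; exact hBuB x hx f hf
      have hTb : J x b ∈ VB := by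
        apply memVB; intro w hw
        rw [hJ, ← hWdef]; exact hBBBF x hx b hb x hx w hw
      have hSb : J u (J x b) = 0 := by rw [hJ]; exact hFuF u hu _ hTb
      simp [LinearMap.comp_apply, map_add, hTf, hSb]
    set c : ℝ := (Real.sqrt 2)⁻¹ with hc_def
    set w : V := c • (x + u) with hw_def
    have hxu : (inner ℝ x u : ℝ) = 0 := horthBF x hx u hu
    have hw1 : ‖w‖ = 1 := by
      have h2 : ‖x + u‖ ^ 2 = 2 := by
        rw [norm_add_sq_real, hx1, hu1, hxu]; ring
      have hnn : ‖x + u‖ = Real.sqrt 2 := by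
        rw [← Real.sqrt_sq (norm_nonneg (x + u)), h2]
      rw [hw_def, norm_smul, Real.norm_eq_abs, hnn, hc_def, abs_inv,
        abs_of_nonneg (Real.sqrt_nonneg 2)]
      exact inv_mul_cancel₀ (by positivity)
    have hcc : c * c = (2:ℝ)⁻¹ := by
      rw [hc_def, ← mul_inv, Real.mul_self_sqrt (by norm_num : (0:ℝ) ≤ 2)]
    have hJw : J w = (2⁻¹ : ℝ) • (J x + J u) := by
      apply LinearMap.ext; intro v
      rw [hJ]
      have e1 : Wv x v u = 0 := hcross1 x hx u hu v
      have e2 : Wv u v x = 0 := hcross2 x hx u hu v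
      have hexp : Wv (c • (x + u)) v (c • (x + u))
          = (c * c) • (Wv x v x + Wv u v u) := by
        simp only [map_add, map_smul, LinearMap.add_apply, LinearMap.smul_apply,
          e1, e2, add_zero, zero_add, smul_smul, smul_add]
        module
      rw [hw_def, hexp, hcc]
      simp [LinearMap.smul_apply, LinearMap.add_apply, hJ, smul_add]
    have hceq1 : (J x).charpoly = (J u).charpoly := hOss x u hx1 hu1
    have hceq2 : (J x).charpoly = (J w).charpoly := hOss x w hx1 hw1
    have ht1 : LinearMap.trace ℝ V ((J x) ∘ₗ (J x))
        = LinearMap.trace ℝ V ((J u) ∘ₗ (J u)) := by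
      rw [sym_trace_sq_roots (J x) (hsymJ x), sym_trace_sq_roots (J u) (hsymJ u), hceq1]
    have ht2 : LinearMap.trace ℝ V ((J x) ∘ₗ (J x))
        = LinearMap.trace ℝ V ((J w) ∘ₗ (J w)) := by
      rw [sym_trace_sq_roots (J x) (hsymJ x), sym_trace_sq_roots (J w) (hsymJ w), hceq2]
    have hcomp : (J w) ∘ₗ (J w)
        = (4⁻¹ : ℝ) • ((J x) ∘ₗ (J x) + (J u) ∘ₗ (J u)) := by
      rw [hJw]
      apply LinearMap.ext; intro v
      have h1 : J x (J u v) = 0 := LinearMap.ext_iff.mp hTS v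
      have h2 : J u (J x v) = 0 := LinearMap.ext_iff.mp hST v
      simp only [LinearMap.comp_apply, LinearMap.add_apply, LinearMap.smul_apply,
        map_add, map_smul, h1, h2, smul_zero, add_zero, zero_add, smul_add, smul_smul]
      module
    have htr : LinearMap.trace ℝ V ((J w) ∘ₗ (J w))
        = 4⁻¹ * (LinearMap.trace ℝ V ((J x) ∘ₗ (J x))
          + LinearMap.trace ℝ V ((J u) ∘ₗ (J u))) := by
      rw [hcomp, map_smul, map_add, smul_eq_mul]
    have hTT0 : LinearMap.trace ℝ V ((J x) ∘ₗ (J x)) = 0 := by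
      rw [ht2, htr, ← ht1]; linarith [ht2, htr, ht1]
    constructor
    · exact sym_eq_zero_of_trace_sq (J x) (hsymJ x) hTT0
    · exact sym_eq_zero_of_trace_sq (J u) (hsymJ u) (ht1 ▸ hTT0)
  obtain ⟨xh, hxhB, hxh1⟩ := hexB
  obtain ⟨uh, huhF, huh1⟩ := hexF
  -- pure Jacobi operators vanish
  have hJB : ∀ x ∈ VB, ∀ y : V, Wv x y x = 0 := by
    intro x hx y
    by_cases hx0 : x = 0
    · simp [hx0]
    set c : ℝ := ‖x‖⁻¹ with hc_def
    have hc : c ≠ 0 := inv_ne_zero (norm_ne_zero_iff.mpr hx0)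
    have hx' : c • x ∈ VB := VB.smul_mem c hx
    have hn' : ‖c • x‖ = 1 := by
      rw [norm_smul, Real.norm_eq_abs, hc_def, abs_inv, abs_norm]
      exact inv_mul_cancel₀ (norm_ne_zero_iff.mpr hx0)
    have h := (core (c • x) hx' hn' uh huhF huh1).1
    have hv := LinearMap.ext_iff.mp h y
    simp only [LinearMap.zero_apply] at hv
    rw [hJ] at hv
    have hexp : Wv (c • x) y (c • x) = (c * c) • Wv x y x := by
      simp [map_smul, LinearMap.smul_apply, smul_smul]
    rw [hexp] at hv
    rcases smul_eq_zero.mp hv with h' | h'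
    · exact absurd h' (mul_ne_zero hc hc)
    · exact h'
  have hJF : ∀ u ∈ VF, ∀ y : V, Wv u y u = 0 := by
    intro u hu y
    by_cases hu0 : u = 0
    · simp [hu0]
    set c : ℝ := ‖u‖⁻¹ with hc_def
    have hc : c ≠ 0 := inv_ne_zero (norm_ne_zero_iff.mpr hu0)
    have hu' : c • u ∈ VF := VF.smul_mem c hu
    have hn' : ‖c • u‖ = 1 := by
      rw [norm_smul, Real.norm_eq_abs, hc_def, abs_inv, abs_norm]
      exact inv_mul_cancel₀ (norm_ne_zero_iff.mpr hu0)
    have h := (core xh hxhB hxh1 (c • u) hu' hn').2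
    have hv := LinearMap.ext_iff.mp h y
    simp only [LinearMap.zero_apply] at hv
    rw [hJ] at hv
    have hexp : Wv (c • u) y (c • u) = (c * c) • Wv u y u := by
      simp [map_smul, LinearMap.smul_apply, smul_smul]
    rw [hexp] at hv
    rcases smul_eq_zero.mp hv with h' | h'
    · exact absurd h' (mul_ne_zero hc hc)
    · exact h'
  -- polarized pure identities
  have s13B : ∀ a ∈ VB, ∀ c' ∈ VB, ∀ b d : V, W a b c' d = -W c' b a d := by
    intro a ha c' hc' b d
    have h := hJB (a + c') (VB.add_mem ha hc') b
    have hexp : Wv (a + c') b (a + c')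
        = Wv a b a + Wv a b c' + Wv c' b a + Wv c' b c' := by
      simp [map_add, LinearMap.add_apply]
      abel
    rw [hexp, hJB a ha b, hJB c' hc' b] at h
    have hv : Wv a b c' + Wv c' b a = 0 := by simpa using h
    rw [hWdef, hWdef]
    have := congrArg (fun v : V => (inner ℝ v d : ℝ)) hv
    simp only [inner_add_left, inner_zero_left] at this
    linarith
  have s13F : ∀ a ∈ VF, ∀ c' ∈ VF, ∀ b d : V, W a b c' d = -W c' b a d := by
    intro a ha c' hc' b d
    have h := hJF (a + c') (VF.add_mem ha hc') b
    have hexp : Wv (a + c') b (a + c')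
        = Wv a b a + Wv a b c' + Wv c' b a + Wv c' b c' := by
      simp [map_add, LinearMap.add_apply]
      abel
    rw [hexp, hJF a ha b, hJF c' hc' b] at h
    have hv : Wv a b c' + Wv c' b a = 0 := by simpa using h
    rw [hWdef, hWdef]
    have := congrArg (fun v : V => (inner ℝ v d : ℝ)) hv
    simp only [inner_add_left, inner_zero_left] at this
    linarith
  -- pure components vanish
  have pureB : ∀ a ∈ VB, ∀ b ∈ VB, ∀ c' ∈ VB, ∀ d : V, W a b c' d = 0 := by
    have id1 : ∀ a ∈ VB, ∀ b ∈ VB, ∀ c' ∈ VB, ∀ d : V,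
        W a b c' d = 2 * W a c' b d := by
      intro a ha b hb c' hc' d
      have e4 := hbianchiW a b c' d
      have e1 : W b c' a d = -W a c' b d := s13B b hb a ha c' d
      have e2 : W c' a b d = -W a c' b d := Wa1 c' a b d
      linarith
    intro a ha b hb c' hc' d
    have q1 := id1 a ha b hb c' hc' d
    have q2 := id1 a ha c' hc' b hb d
    linarith
  have pureF : ∀ a ∈ VF, ∀ b ∈ VF, ∀ c' ∈ VF, ∀ d : V, W a b c' d = 0 := by
    have id1 : ∀ a ∈ VF, ∀ b ∈ VF, ∀ c' ∈ VF, ∀ d : V,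
        W a b c' d = 2 * W a c' b d := by
      intro a ha b hb c' hc' d
      have e4 := hbianchiW a b c' d
      have e1 : W b c' a d = -W a c' b d := s13F b hb a ha c' d
      have e2 : W c' a b d = -W a c' b d := Wa1 c' a b d
      linarith
    intro a ha b hb c' hc' d
    have q1 := id1 a ha b hb c' hc' d
    have q2 := id1 a ha c' hc' b hb d
    linarith
  -- multilinearity of the scalar tensor
  have Wadd1 : ∀ p q b c d : V, W (p + q) b c d = W p b c d + W q b c d := by
    intro p q b c d
    simp [hWdef, map_add, LinearMap.add_apply, inner_add_left]
  have Wadd2 : ∀ a p q c d : V, W a (p + q) c d = W a p c d + W a q c d := by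
    intro a p q c d
    simp [hWdef, map_add, LinearMap.add_apply, inner_add_left]
  have Wadd3 : ∀ a b p q d : V, W a b (p + q) d = W a b p d + W a b q d := by
    intro a b p q d
    simp [hWdef, map_add, inner_add_left]
  have Wadd4 : ∀ a b c p q : V, W a b c (p + q) = W a b c p + W a b c q := by
    intro a b c p q
    simp [hWdef, inner_add_right]
  -- final assembly
  intro a b c d
  obtain ⟨a1, ha1, a2, ha2, rfl⟩ := hdecomp a
  obtain ⟨b1, hb1, b2, hb2, rfl⟩ := hdecomp b
  obtain ⟨c1, hc1, c2, hc2, rfl⟩ := hdecomp c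
  obtain ⟨d1, hd1, d2, hd2, rfl⟩ := hdecomp d
  simp only [Wadd1, Wadd2, Wadd3, Wadd4]
  rw [pureB a1 ha1 b1 hb1 c1 hc1 d1, pureB a1 ha1 b1 hb1 c1 hc1 d2,
    hBBFB a1 ha1 b1 hb1 c2 hc2 d1 hd1, hBBFF a1 ha1 b1 hb1 c2 hc2 d2 hd2,
    hBFBB a1 ha1 b2 hb2 c1 hc1 d1 hd1, hBFBF a1 ha1 b2 hb2 c1 hc1 d2 hd2,
    hBFFB a1 ha1 b2 hb2 c2 hc2 d1 hd1, hBFFF a1 ha1 b2 hb2 c2 hc2 d2 hd2,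
    hFBBB a2 ha2 b1 hb1 c1 hc1 d1 hd1, hFBBF a2 ha2 b1 hb1 c1 hc1 d2 hd2,
    hFBFB a2 ha2 b1 hb1 c2 hc2 d1 hd1, hFBFF a2 ha2 b1 hb1 c2 hc2 d2 hd2,
    hFFBB a2 ha2 b2 hb2 c1 hc1 d1 hd1, hFFBF a2 ha2 b2 hb2 c1 hc1 d2 hd2,
    hFFFB a2 ha2 b2 hb2 c2 hc2 d1 hd1, pureF a2 ha2 b2 hb2 c2 hc2 d2]
  norm_num
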